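/- For every even integer m ≥ 2, the polynomial He_m(x)² has Hermite rank 2; precisely, ∫ He_m(x)² · x dγ(x) = 0 and ∫ He_m(x)² · He_2(x) dγ(x) = 2 · m² · (m−1)! ≠ 0. -/

import Mathlib

open Polynomial MeasureTheory ProbabilityTheory
open scoped ENNReal NNReal

/-- The `n`-th probabilists' Hermite polynomial, with real coefficients. -/
noncomputable def hermiteR (n : ℕ) : Polynomial ℝ :=
  (Polynomial.hermite n).map (Int.castRingHom ℝ)

/-- The standard Gaussian measure `N(0,1)` on `ℝ`. -/
noncomputable def stdGaussian : Measure ℝ := gaussianReal 0 1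

/-- `F` has Hermite rank `m`: `m ≥ 1` is the smallest integer `k ≥ 1` such that
`∫ F(x) He_k(x) dγ(x) ≠ 0`, where `γ` is the standard Gaussian measure. -/
def HasHermiteRank (F : Polynomial ℝ) (m : ℕ) : Prop :=
  1 ≤ m ∧ (∫ x, F.eval x * (hermiteR m).eval x ∂stdGaussian) ≠ 0 ∧
    ∀ k, 1 ≤ k → k < m → (∫ x, F.eval x * (hermiteR k).eval x ∂stdGaussian) = 0

namespace HermiteAux

noncomputable def w (x : ℝ) : ℝ := Real.exp (-(x ^ 2 / 2))

lemma w_pos (x : ℝ) : 0 < w x := Real.exp_pos _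

lemma continuous_w : Continuous w := by
  unfold w; fun_prop

lemma bound (P : Polynomial ℝ) :
    ∃ C : ℝ, ∀ x : ℝ, |P.eval x * w x| ≤ C * Real.exp (-(x ^ 2 / 4)) := by
  induction P using Polynomial.induction_on' with
  | add p q hp hq =>
    obtain ⟨C₁, h₁⟩ := hp; obtain ⟨C₂, h₂⟩ := hq
    refine ⟨C₁ + C₂, fun x => ?_⟩
    have h₁ := h₁ x; have h₂ := h₂ x
    calc |(p + q).eval x * w x| = |p.eval x * w x + q.eval x * w x| := by
          rw [Polynomial.eval_add]; ring_nf
      _ ≤ |p.eval x * w x| + |q.eval x * w x| := abs_add_le _ _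
      _ ≤ (C₁ + C₂) * Real.exp (-(x ^ 2 / 4)) := by linarith
  | monomial n a =>
    refine ⟨|a| * Real.exp ((n : ℝ) ^ 2), fun x => ?_⟩
    have habs : |x| ≤ Real.exp |x| := by
      have := Real.add_one_le_exp |x|
      linarith [abs_nonneg x]
    have h1 : |x| ^ n ≤ Real.exp ((n : ℝ) * |x|) := by
      calc |x| ^ n ≤ (Real.exp |x|) ^ n := pow_le_pow_left₀ (abs_nonneg x) habs n
        _ = Real.exp ((n : ℝ) * |x|) := by rw [← Real.exp_nat_mul]
    have h2 : (n : ℝ) * |x| ≤ (n : ℝ) ^ 2 + x ^ 2 / 4 := by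
      nlinarith [sq_nonneg ((n : ℝ) - |x| / 2), sq_abs x]
    have key : |x| ^ n * w x ≤ Real.exp ((n : ℝ) ^ 2) * Real.exp (-(x ^ 2 / 4)) := by
      calc |x| ^ n * w x ≤ Real.exp ((n : ℝ) * |x|) * w x :=
            mul_le_mul_of_nonneg_right h1 (w_pos x).le
        _ = Real.exp ((n : ℝ) * |x| + -(x ^ 2 / 2)) := by rw [w, ← Real.exp_add]
        _ ≤ Real.exp ((n : ℝ) ^ 2 + -(x ^ 2 / 4)) := Real.exp_le_exp.mpr (by linarith)
        _ = Real.exp ((n : ℝ) ^ 2) * Real.exp (-(x ^ 2 / 4)) := by rw [Real.exp_add]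
    have : |(Polynomial.monomial n a).eval x * w x| = |a| * (|x| ^ n * w x) := by
      rw [Polynomial.eval_monomial, abs_mul, abs_mul, abs_pow, abs_of_pos (w_pos x), mul_assoc]
    rw [this]
    calc |a| * (|x| ^ n * w x)
        ≤ |a| * (Real.exp ((n : ℝ) ^ 2) * Real.exp (-(x ^ 2 / 4))) :=
          mul_le_mul_of_nonneg_left key (abs_nonneg a)
      _ = |a| * Real.exp ((n : ℝ) ^ 2) * Real.exp (-(x ^ 2 / 4)) := by ring

lemma integrable_poly (P : Polynomial ℝ) : Integrable (fun x => P.eval x * w x) := by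
  obtain ⟨C, hC⟩ := bound P
  have hg : Integrable (fun x : ℝ => C * Real.exp (-(x ^ 2 / 4))) := by
    have : Integrable (fun x : ℝ => Real.exp (-(4⁻¹ : ℝ) * x ^ 2)) :=
      integrable_exp_neg_mul_sq (by norm_num)
    have he : (fun x : ℝ => C * Real.exp (-(x ^ 2 / 4)))
        = fun x : ℝ => C * Real.exp (-(4⁻¹ : ℝ) * x ^ 2) := by
      funext x; ring_nf
    rw [he]
    exact this.const_mul C
  refine hg.mono' ?_ ?_
  · exact (P.continuous.mul continuous_w).aestronglyMeasurable
  · filter_upwards with x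
    have := hC x
    rw [abs_mul] at this
    simpa using this

noncomputable def I (P : Polynomial ℝ) : ℝ := ∫ x, P.eval x * w x

lemma I_sub (P Q : Polynomial ℝ) : I (P - Q) = I P - I Q := by
  unfold I
  rw [← integral_sub (integrable_poly P) (integrable_poly Q)]
  congr 1; funext x; simp [sub_mul]

lemma I_add (P Q : Polynomial ℝ) : I (P + Q) = I P + I Q := by
  unfold I
  rw [← integral_add (integrable_poly P) (integrable_poly Q)]
  congr 1; funext x; simp [add_mul]

lemma I_Cmul (c : ℝ) (P : Polynomial ℝ) : I (Polynomial.C c * P) = c * I P := by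
  unfold I
  rw [← integral_const_mul]
  congr 1; funext x; simp [mul_assoc]

lemma I_ibp (P : Polynomial ℝ) : I (Polynomial.X * P) = I (derivative P) := by
  have hder : ∀ x : ℝ, HasDerivAt (fun x => P.eval x * w x)
      ((derivative P - Polynomial.X * P).eval x * w x) x := by
    intro x
    have h1 : HasDerivAt (fun x : ℝ => P.eval x) ((derivative P).eval x) x := P.hasDerivAt x
    have h2 : HasDerivAt w (-x * w x) x := by
      have hin : HasDerivAt (fun x : ℝ => -(x ^ 2 / 2)) (-x) x := by
        have := ((hasDerivAt_pow 2 x).div_const 2).fun_neg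
        refine this.congr_deriv ?_
        push_cast; ring
      have := hin.exp
      unfold w; simpa [mul_comm] using this
    have := h1.fun_mul h2
    refine this.congr_deriv ?_
    simp only [Polynomial.eval_sub, Polynomial.eval_mul, Polynomial.eval_X]
    ring
  have key := integral_eq_zero_of_hasDerivAt_of_integrable hder
    (integrable_poly (derivative P - Polynomial.X * P)) (integrable_poly P)
  have : I (derivative P - Polynomial.X * P) = 0 := key
  rw [I_sub] at this
  linarith

lemma hermiteR_zero : hermiteR 0 = 1 := by
  simp [hermiteR]

lemma hermiteR_succ (n : ℕ) :
    hermiteR (n + 1) = Polynomial.X * hermiteR n - derivative (hermiteR n) := by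
  unfold hermiteR
  rw [Polynomial.hermite_succ, Polynomial.map_sub, Polynomial.map_mul, Polynomial.map_X,
    Polynomial.derivative_map]

lemma hermiteR_one : hermiteR 1 = Polynomial.X := by
  rw [hermiteR_succ, hermiteR_zero]
  simp

lemma deriv_hermiteR_succ : ∀ n : ℕ,
    derivative (hermiteR (n + 1)) = Polynomial.C ((n : ℝ) + 1) * hermiteR n := by
  intro n
  induction n with
  | zero => simp [hermiteR_one, hermiteR_zero]
  | succ n ih =>
    rw [hermiteR_succ (n + 1), derivative_sub, derivative_mul, derivative_X, one_mul, ih,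
      Polynomial.derivative_C_mul]
    have : Polynomial.X * (Polynomial.C ((n : ℝ) + 1) * hermiteR n)
        - Polynomial.C ((n : ℝ) + 1) * derivative (hermiteR n)
        = Polynomial.C ((n : ℝ) + 1) * hermiteR (n + 1) := by
      rw [hermiteR_succ]; ring
    rw [add_sub_assoc, this]
    have hC : (Polynomial.C ((↑(n + 1) : ℝ) + 1) : Polynomial ℝ)
        = Polynomial.C ((n : ℝ) + 1) + 1 := by
      push_cast
      rw [map_add, map_add]
      simp
    rw [hC]
    ring

lemma deriv_hermiteR (n : ℕ) :
    derivative (hermiteR n) = Polynomial.C (n : ℝ) * hermiteR (n - 1) := by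
  cases n with
  | zero => simp [hermiteR_zero]
  | succ k =>
    have := deriv_hermiteR_succ k
    simpa [Nat.cast_succ] using this

lemma hermiteR_rec (n : ℕ) :
    hermiteR (n + 1) = Polynomial.X * hermiteR n - Polynomial.C (n : ℝ) * hermiteR (n - 1) := by
  rw [hermiteR_succ, deriv_hermiteR]

lemma I_one : I 1 = Real.sqrt (2 * Real.pi) := by
  have h : I 1 = ∫ x : ℝ, Real.exp (-(2⁻¹ : ℝ) * x ^ 2) := by
    unfold I w
    congr 1; funext x
    rw [Polynomial.eval_one, one_mul]
    congr 1; ring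
  rw [h, integral_gaussian]
  congr 1
  rw [div_eq_mul_inv, inv_inv]
  ring

lemma I_orth : ∀ k j : ℕ, I (hermiteR j * hermiteR k)
    = if j = k then (k.factorial : ℝ) * Real.sqrt (2 * Real.pi) else 0 := by
  intro k
  induction k with
  | zero =>
    intro j
    cases j with
    | zero => simp [hermiteR_zero, I_one]
    | succ i =>
      have e : hermiteR (i + 1) * hermiteR 0
          = Polynomial.X * hermiteR i - Polynomial.C (i : ℝ) * hermiteR (i - 1) := by
        rw [hermiteR_rec, hermiteR_zero, mul_one]
      rw [e, I_sub, I_ibp, deriv_hermiteR, I_Cmul, sub_self]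
      simp
  | succ k ih =>
    intro j
    have step : I (hermiteR j * hermiteR (k + 1)) = (j : ℝ) * I (hermiteR (j - 1) * hermiteR k) := by
      have e1 : hermiteR j * hermiteR (k + 1)
          = Polynomial.X * (hermiteR j * hermiteR k)
            - Polynomial.C (k : ℝ) * (hermiteR j * hermiteR (k - 1)) := by
        rw [hermiteR_rec]; ring
      have e2 : derivative (hermiteR j * hermiteR k)
          = Polynomial.C (j : ℝ) * (hermiteR (j - 1) * hermiteR k)
            + Polynomial.C (k : ℝ) * (hermiteR j * hermiteR (k - 1)) := by
        rw [derivative_mul, deriv_hermiteR, deriv_hermiteR]; ring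
      rw [e1, I_sub, I_ibp, e2, I_add, I_Cmul, I_Cmul]; ring
    rw [step]
    cases j with
    | zero => simp
    | succ i =>
      have hii : (i + 1 : ℕ) - 1 = i := rfl
      rw [hii, ih i]
      by_cases h : i = k
      · subst h
        simp only [if_pos rfl, if_pos rfl]
        rw [Nat.factorial_succ]
        push_cast; ring
      · have h2 : ¬ (i + 1 = k + 1) := by omega
        simp [h, h2]

lemma I_T1 (m : ℕ) (hm : 1 ≤ m) : I (hermiteR m ^ 2 * hermiteR 1) = 0 := by
  have e : hermiteR m ^ 2 * hermiteR 1 = Polynomial.X * (hermiteR m ^ 2) := by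
    rw [hermiteR_one]; ring
  have e2 : derivative (hermiteR m ^ 2)
      = Polynomial.C (2 * (m : ℝ)) * (hermiteR m * hermiteR (m - 1)) := by
    have := Polynomial.derivative_pow (hermiteR m) 2
    rw [this, deriv_hermiteR, map_mul]
    push_cast
    ring
  rw [e, I_ibp, e2, I_Cmul, I_orth]
  have : ¬ (m = m - 1) := by omega
  simp [this]

lemma I_T2 (m : ℕ) (hm : 2 ≤ m) :
    I (hermiteR m ^ 2 * hermiteR 2)
      = 2 * (m : ℝ) ^ 2 * ((m - 1).factorial : ℝ) * Real.sqrt (2 * Real.pi) := by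
  have h2 : hermiteR 2 = Polynomial.X ^ 2 - 1 := by
    rw [hermiteR_succ, hermiteR_one, derivative_X]
    ring
  have e : hermiteR m ^ 2 * hermiteR 2
      = Polynomial.X * (Polynomial.X * hermiteR m ^ 2) - hermiteR m * hermiteR m := by
    rw [h2]; ring
  rw [e, I_sub, I_ibp]
  have e2 : derivative (Polynomial.X * hermiteR m ^ 2)
      = hermiteR m * hermiteR m
        + Polynomial.C (2 * (m : ℝ)) * (Polynomial.X * (hermiteR m * hermiteR (m - 1))) := by
    rw [derivative_mul, derivative_X, one_mul, Polynomial.derivative_pow, deriv_hermiteR, map_mul]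
    push_cast
    ring
  rw [e2, I_add, I_Cmul, I_ibp]
  have e3 : derivative (hermiteR m * hermiteR (m - 1))
      = Polynomial.C (m : ℝ) * (hermiteR (m - 1) * hermiteR (m - 1))
        + Polynomial.C ((m - 1 : ℕ) : ℝ) * (hermiteR m * hermiteR (m - 1 - 1)) := by
    rw [derivative_mul, deriv_hermiteR, deriv_hermiteR]; ring
  rw [e3, I_add, I_Cmul, I_Cmul, I_orth, I_orth, I_orth]
  have hmm : ¬ (m = m - 1 - 1) := by omega
  simp [hmm]
  ring_nf

lemma gauss_eq (Q : Polynomial ℝ) :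
    ∫ x, Q.eval x ∂stdGaussian = (Real.sqrt (2 * Real.pi))⁻¹ * I Q := by
  rw [_root_.stdGaussian, gaussianReal_of_var_ne_zero 0 one_ne_zero]
  have hd : gaussianPDF 0 1 = fun x => ((Real.toNNReal (gaussianPDFReal 0 1 x) : ℝ≥0) : ℝ≥0∞) := rfl
  rw [hd, integral_withDensity_eq_integral_smul
    ((measurable_gaussianPDFReal 0 1).real_toNNReal) (fun x => Q.eval x)]
  unfold I w
  rw [← integral_const_mul]
  congr 1; funext x
  rw [NNReal.smul_def, Real.coe_toNNReal _ (gaussianPDFReal_nonneg 0 1 x)]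
  rw [gaussianPDFReal]
  push_cast
  rw [mul_one, sub_zero, smul_eq_mul]
  ring_nf

end HermiteAux

open HermiteAux

/-- For every even `m ≥ 2`, the polynomial `He_m(x)²` has Hermite rank `2`; precisely,
`∫ He_m(x)² x dγ(x) = 0` and `∫ He_m(x)² He₂(x) dγ(x) = 2 m² (m-1)! ≠ 0`. -/
theorem hermite_sq_rank_two (m : ℕ) (hm : 2 ≤ m) (hme : Even m) :
    HasHermiteRank ((hermiteR m) ^ 2) 2 ∧
    (∫ x, ((hermiteR m).eval x) ^ 2 * x ∂stdGaussian) = 0 ∧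
    (∫ x, ((hermiteR m).eval x) ^ 2 * (hermiteR 2).eval x ∂stdGaussian)
      = 2 * (m : ℝ) ^ 2 * ((m - 1).factorial : ℝ) ∧
    2 * (m : ℝ) ^ 2 * ((m - 1).factorial : ℝ) ≠ 0 := by
  have hsqrt : (0 : ℝ) < Real.sqrt (2 * Real.pi) :=
    Real.sqrt_pos.mpr (by positivity)
  have hm0 : (0 : ℝ) < (m : ℝ) := by exact_mod_cast Nat.lt_of_lt_of_le (by norm_num) hm
  have hfac : (0 : ℝ) < ((m - 1).factorial : ℝ) := by exact_mod_cast (m - 1).factorial_pos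
  have hne : 2 * (m : ℝ) ^ 2 * ((m - 1).factorial : ℝ) ≠ 0 := by positivity
  have key2 : (∫ x, ((hermiteR m) ^ 2).eval x * (hermiteR 2).eval x ∂stdGaussian)
      = 2 * (m : ℝ) ^ 2 * ((m - 1).factorial : ℝ) := by
    have : (∫ x, ((hermiteR m) ^ 2).eval x * (hermiteR 2).eval x ∂stdGaussian)
        = ∫ x, ((hermiteR m ^ 2) * hermiteR 2).eval x ∂stdGaussian := by
      simp only [Polynomial.eval_mul]
    rw [this, gauss_eq, I_T2 m hm]
    field_simp
  have key1 : (∫ x, ((hermiteR m) ^ 2).eval x * (hermiteR 1).eval x ∂stdGaussian) = 0 := by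
    have : (∫ x, ((hermiteR m) ^ 2).eval x * (hermiteR 1).eval x ∂stdGaussian)
        = ∫ x, ((hermiteR m ^ 2) * hermiteR 1).eval x ∂stdGaussian := by
      simp only [Polynomial.eval_mul]
    rw [this, gauss_eq, I_T1 m (by omega), mul_zero]
  refine ⟨⟨by norm_num, by rw [key2]; exact hne, ?_⟩, ?_, ?_, hne⟩
  · intro k hk1 hk2
    have : k = 1 := by omega
    subst this
    exact key1
  · have : (∫ x, ((hermiteR m).eval x) ^ 2 * x ∂stdGaussian)
        = ∫ x, ((hermiteR m) ^ 2).eval x * (hermiteR 1).eval x ∂stdGaussian := by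
      simp only [Polynomial.eval_pow, hermiteR_one, Polynomial.eval_X]
    rw [this, key1]
  · have : (∫ x, ((hermiteR m).eval x) ^ 2 * (hermiteR 2).eval x ∂stdGaussian)
        = ∫ x, ((hermiteR m) ^ 2).eval x * (hermiteR 2).eval x ∂stdGaussian := by
      simp only [Polynomial.eval_pow]
    rw [this, key2]
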